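/- For every k ∈ {1,…,n} one has D(λ_k) = φ_k · A′(λ_k); equivalently, since A′(λ_k) ≠ 0, the variables φ_k are recovered from the spectral data by φ_k = D(λ_k)/A′(λ_k). (This is the spinless case of the theorem that on the Calogero–Moser space attached to the cyclic quiver the conjugate variables φ_k are given by the rational function r(z) = D(z)/A′(z) evaluated at the eigenvalues λ_k.) -/

import Mathlib

open Matrix BigOperators

noncomputable section

/-- The block matrix `L̃` with diagonal blocks `Λ = diag(λ₁,…,λₙ)` at positions `(h, h+1)`:
its entry in row `(h,j)` and column `(i,k)` is `λⱼ` if `k = j` and `i = h + 1` in `ℤ/mℤ`,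
and `0` otherwise. -/
def Ltilde (m n : ℕ) (lam : Fin n → ℂ) :
    Matrix (ZMod m × Fin n) (ZMod m × Fin n) ℂ :=
  Matrix.of fun p q => if q.2 = p.2 ∧ q.1 = p.1 + 1 then lam p.2 else 0

/-- `|g| = g₀ + g₁ + ⋯ + g_{m-1}`. -/
def gAbs (m : ℕ) (g : ZMod m → ℂ) : ℂ :=
  ∑ s ∈ Finset.range m, g (s : ZMod m)

/-- `cᵢ = Σ_{r=0}^{i} g_r − Σ_{s=0}^{m−1} ((m−s)/m)·g_s`, the index `i` read modulo `m`. -/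
def cConst (m : ℕ) (g : ZMod m → ℂ) (i : ZMod m) : ℂ :=
  (∑ r ∈ Finset.range (i.val + 1), g (r : ZMod m)) -
    ∑ s ∈ Finset.range m, (((m : ℂ) - (s : ℂ)) / (m : ℂ)) * g (s : ZMod m)

/-- The (spinless) matrix `Q̃`: its entry in row `(h,j)` and column `(i,k)` vanishes unless
`h = i + 1` in `ℤ/mℤ`, in which case it equals `φⱼ + cᵢ/λⱼ` if `k = j`, and
`−|g|·λⱼ^{m−i−1}·λₖ^{i}/(λⱼ^m − λₖ^m)` if `k ≠ j` (where `i` is taken as its representative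
in `{0,…,m−1}`). -/
def Qtilde (m n : ℕ) (g : ZMod m → ℂ) (lam phi : Fin n → ℂ) :
    Matrix (ZMod m × Fin n) (ZMod m × Fin n) ℂ :=
  Matrix.of fun p q =>
    if p.1 = q.1 + 1 then
      if q.2 = p.2 then phi p.2 + cConst m g q.1 / lam p.2
      else -(gAbs m g) * lam p.2 ^ (m - q.1.val - 1) * lam q.2 ^ q.1.val /
        (lam p.2 ^ m - lam q.2 ^ m)
    else 0

/-- `A(z) = det(z·1 − L̃)`. -/
def Afun (m n : ℕ) [NeZero m] (lam : Fin n → ℂ) (z : ℂ) : ℂ :=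
  (z • (1 : Matrix (ZMod m × Fin n) (ZMod m × Fin n) ℂ) - Ltilde m n lam).det

/-- `D(z) = tr(Q̃ · adj(z·1 − L̃))`. -/
def Dfun (m n : ℕ) [NeZero m] (g : ZMod m → ℂ) (lam phi : Fin n → ℂ) (z : ℂ) : ℂ :=
  Matrix.trace (Qtilde m n g lam phi *
    (z • (1 : Matrix (ZMod m × Fin n) (ZMod m × Fin n) ℂ) - Ltilde m n lam).adjugate)

/-- `C(z) = w̃ · Q̃ · adj(z·1 − L̃) · ṽ`, where `ṽ` has entry `1` at each index `(0,j)` and `0`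
elsewhere, and `w̃` has entry `|g|` at each index `(0,j)` and `0` elsewhere. -/
def Cfun (m n : ℕ) [NeZero m] (g : ZMod m → ℂ) (lam phi : Fin n → ℂ) (z : ℂ) : ℂ :=
  (fun p : ZMod m × Fin n => if p.1 = 0 then gAbs m g else 0) ⬝ᵥ
    ((Qtilde m n g lam phi *
        (z • (1 : Matrix (ZMod m × Fin n) (ZMod m × Fin n) ℂ) - Ltilde m n lam).adjugate) *ᵥ
      fun p : ZMod m × Fin n => if p.1 = 0 then (1 : ℂ) else 0)


namespace SpinAux
open Finset Polynomial

variable {R : Type*} [CommRing R]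



variable {R : Type*} [CommRing R]

/-- cyclic shift matrix: entry 1 at (h, h+a). -/
def cyc (m : ℕ) (R : Type*) [CommRing R] (a : ZMod m) : Matrix (ZMod m) (ZMod m) R :=
  Matrix.of fun h i => if i = h + a then 1 else 0

lemma cyc_zero (m : ℕ) : cyc m R 0 = 1 := by
  ext h i
  simp [cyc, Matrix.one_apply, eq_comm]

lemma cyc_mul (m : ℕ) [NeZero m] (a b : ZMod m) :
    cyc m R a * cyc m R b = cyc m R (a + b) := by
  ext h i
  simp only [cyc, Matrix.mul_apply, Matrix.of_apply, ite_mul, one_mul, zero_mul]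
  rw [Finset.sum_ite_eq' Finset.univ (h + a) (fun x => if i = x + b then (1:R) else 0)]
  simp [add_assoc]

/-- The "partial geometric series" matrix. -/
def Smat (m : ℕ) (z lam : R) : Matrix (ZMod m) (ZMod m) R :=
  ∑ t ∈ Finset.range m, (z ^ (m - 1 - t) * lam ^ t) • cyc m R (t : ZMod m)

lemma Smat_mul (m : ℕ) [NeZero m] (z lam : R) :
    Smat m z lam * (z • (1 : Matrix (ZMod m) (ZMod m) R) - lam • cyc m R 1) =
      (z ^ m - lam ^ m) • 1 := by
  have hm : 0 < m := Nat.pos_of_ne_zero (NeZero.ne m)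
  rw [Smat, Finset.sum_mul]
  have key : ∀ t ∈ Finset.range m,
      ((z ^ (m - 1 - t) * lam ^ t) • cyc m R (t : ZMod m)) *
        (z • (1 : Matrix (ZMod m) (ZMod m) R) - lam • cyc m R 1)
      = (z ^ (m - t) * lam ^ t) • cyc m R ((t : ℕ) : ZMod m)
        - (z ^ (m - (t+1)) * lam ^ (t+1)) • cyc m R (((t+1 : ℕ)) : ZMod m) := by
    intro t ht
    rw [Finset.mem_range] at ht
    rw [mul_sub]
    congr 1
    · rw [smul_mul_assoc, mul_smul_comm, Matrix.mul_one, smul_smul]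
      have h0 : m - t = (m - 1 - t) + 1 := by omega
      rw [h0, pow_succ]
      ring
    · rw [smul_mul_assoc, mul_smul_comm, cyc_mul, smul_smul]
      have h1 : (m - (t+1)) = m - 1 - t := by omega
      have h2 : (((t+1 : ℕ)) : ZMod m) = (t : ZMod m) + 1 := by push_cast; ring
      rw [h1, h2]
      ring_nf
  rw [Finset.sum_congr rfl key, Finset.sum_range_sub'
    (f := fun t => (z ^ (m - t) * lam ^ t) • cyc m R ((t : ℕ) : ZMod m))]
  simp only [Nat.sub_zero, pow_zero, mul_one, Nat.cast_zero, cyc_zero, Nat.sub_self, one_mul,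
    ZMod.natCast_self]
  rw [sub_smul]




lemma perm_classify (m : ℕ) [NeZero m] (σ : Equiv.Perm (ZMod m))
    (h : ∀ i, σ i = i ∨ σ i = i - 1) (hσ : σ ≠ 1) :
    σ = Equiv.addRight (-1 : ZMod m) := by
  obtain ⟨i0, hi0⟩ : ∃ i, σ i ≠ i := by
    by_contra hc
    push_neg at hc
    exact hσ (Equiv.ext fun i => hc i)
  have hσi0 : σ i0 = i0 - 1 := (h i0).resolve_left hi0
  have h10 : (1 : ZMod m) ≠ 0 := by
    intro h1
    exact hi0 (by rw [hσi0, h1, sub_zero])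
  have hstep : ∀ j, σ j = j - 1 → σ (j - 1) = j - 1 - 1 := by
    intro j hj
    rcases h (j - 1) with h1 | h1
    · exfalso
      have : j - 1 = j := σ.injective (by rw [hj, h1])
      rw [sub_eq_self] at this
      exact h10 this
    · exact h1
  have hall : ∀ t : ℕ, σ (i0 - t) = i0 - t - 1 := by
    intro t
    induction t with
    | zero => simpa using hσi0
    | succ t ih =>
      have := hstep _ ih
      have hc : ((t + 1 : ℕ) : ZMod m) = (t : ZMod m) + 1 := by push_cast; ring
      rw [hc, ← sub_sub]
      exact this
  refine Equiv.ext fun i => ?_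
  have hi : i0 - ((i0 - i).val : ZMod m) = i := by
    rw [ZMod.natCast_zmod_val, sub_sub_cancel]
  have := hall (i0 - i).val
  rw [hi] at this
  rw [this]
  simp [sub_eq_add_neg]

lemma addRight_one_eq_finRotate (N : ℕ) :
    (Equiv.addRight (1 : ZMod (N + 2)) : Equiv.Perm (ZMod (N + 2))) = finRotate (N + 2) :=
  Equiv.ext fun i => (finRotate_succ_apply i).symm

lemma sign_addRight_neg_one (N : ℕ) :
    Equiv.Perm.sign (Equiv.addRight (-1 : ZMod (N + 2))) = (-1) ^ (N + 1) := by
  have h : (Equiv.addRight (-1 : ZMod (N + 2))) = (Equiv.addRight (1 : ZMod (N + 2)))⁻¹ := by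
    ext i
    simp [Equiv.Perm.inv_def, sub_eq_add_neg]
  rw [h, map_inv, addRight_one_eq_finRotate]
  have key := sign_finRotate (N + 2)
  exact (congrArg Inv.inv key).trans (by simp)

lemma det_cycblock (m : ℕ) [NeZero m] (z lam : R) :
    (z • (1 : Matrix (ZMod m) (ZMod m) R) - lam • cyc m R 1).det = z ^ m - lam ^ m := by
  have hMe : ∀ h i : ZMod m, (z • (1 : Matrix (ZMod m) (ZMod m) R) - lam • cyc m R 1) h i =
      (if h = i then z else 0) - (if i = h + 1 then lam else 0) := by
    intro h i
    simp [cyc, Matrix.one_apply, Matrix.sub_apply, mul_ite, mul_zero, mul_one]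
  rcases eq_or_ne m 1 with hm1 | hm1
  · subst hm1
    rw [Matrix.det_unique, hMe, if_pos rfl, if_pos (Subsingleton.elim _ _)]
    simp
  · have hm2 : 2 ≤ m := by
      have := NeZero.ne m
      omega
    obtain ⟨N, rfl⟩ : ∃ N, m = N + 2 := ⟨m - 2, by omega⟩
    set m := N + 2 with hmdef
    have h10 : (1 : ZMod m) ≠ 0 := by
      have : Fact (1 < m) := ⟨by omega⟩
      exact one_ne_zero
    set τ : Equiv.Perm (ZMod m) := Equiv.addRight (-1 : ZMod m) with hτ
    have hτ1 : (1 : Equiv.Perm (ZMod m)) ≠ τ := by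
      intro hc
      have h0 : (0 : ZMod m) = 0 + -1 := by
        conv_lhs => rw [show (0 : ZMod m) = (1 : Equiv.Perm (ZMod m)) 0 from rfl, hc]
        simp [hτ]
      rw [zero_add] at h0
      exact h10 (by rw [← neg_eq_zero, ← h0])
    set M := z • (1 : Matrix (ZMod m) (ZMod m) R) - lam • cyc m R 1 with hM
    have hdet : M.det = ∑ σ ∈ ({1, τ} : Finset (Equiv.Perm (ZMod m))),
        Equiv.Perm.sign σ • ∏ i, M (σ i) i := by
      rw [Matrix.det_apply]
      refine (Finset.sum_subset (Finset.subset_univ _) ?_).symm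
      intro σ _ hσ
      simp only [Finset.mem_insert, Finset.mem_singleton, not_or] at hσ
      obtain ⟨hσ1, hστ⟩ := hσ
      have hex : ∃ i, σ i ≠ i ∧ σ i ≠ i - 1 := by
        by_contra hc
        push_neg at hc
        have hcl : ∀ i, σ i = i ∨ σ i = i - 1 := by
          intro i
          by_cases h1 : σ i = i
          · exact Or.inl h1
          · exact Or.inr (hc i h1)
        exact hστ (perm_classify m σ hcl hσ1)
      obtain ⟨i, hi1, hi2⟩ := hex
      have hz : M (σ i) i = 0 := by
        rw [hMe, if_neg hi1, if_neg, sub_zero]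
        intro hc
        exact hi2 (eq_sub_of_add_eq hc.symm)
      exact smul_eq_zero_of_right _ (Finset.prod_eq_zero (Finset.mem_univ i) hz)
    rw [hdet, Finset.sum_pair hτ1]
    have hone : (Equiv.Perm.sign (1 : Equiv.Perm (ZMod m))) • ∏ i, M ((1 : Equiv.Perm (ZMod m)) i) i = z ^ m := by
      have hd : ∀ i : ZMod m, M i i = z := by
        intro i
        rw [hMe, if_pos rfl, if_neg, sub_zero]
        intro hc
        exact h10 (by rwa [left_eq_add] at hc)
      simp only [Equiv.Perm.one_apply, hd, Finset.prod_const, Finset.card_univ, ZMod.card]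
      rw [_root_.map_one, one_smul]
    have htau : (Equiv.Perm.sign τ) • ∏ i, M (τ i) i = -lam ^ m := by
      have hτa : ∀ i : ZMod m, τ i = i - 1 := by
        intro i; simp [hτ, sub_eq_add_neg]
      have hent : ∀ i : ZMod m, M (τ i) i = -lam := by
        intro i
        rw [hτa, hMe, if_neg, if_pos (by ring), zero_sub]
        intro hc
        exact h10 (by rwa [sub_eq_self] at hc)
      have hsign : Equiv.Perm.sign τ = (-1) ^ (N + 1) := sign_addRight_neg_one N
      simp only [hent, Finset.prod_const, Finset.card_univ, ZMod.card, hsign]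
      rw [Units.smul_def]
      push_cast
      rw [zsmul_eq_mul]
      push_cast
      rw [neg_pow lam, ← mul_assoc, ← pow_add]
      have hodd : Odd (N + 1 + (N + 2)) := ⟨N + 1, by ring⟩
      rw [hodd.neg_one_pow]
      ring
    rw [hone, htau]
    ring




def Mmat (m n : ℕ) (z : R) (l : Fin n → R) : Matrix (ZMod m × Fin n) (ZMod m × Fin n) R :=
  Matrix.blockDiagonal fun j => z • (1 : Matrix (ZMod m) (ZMod m) R) - l j • cyc m R 1

def Nmat (m n : ℕ) (z : R) (l : Fin n → R) : Matrix (ZMod m × Fin n) (ZMod m × Fin n) R :=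
  Matrix.blockDiagonal fun j =>
    (∏ t ∈ Finset.univ.erase j, (z ^ m - l t ^ m)) • Smat m z (l j)

lemma det_Mmat (m n : ℕ) [NeZero m] (z : R) (l : Fin n → R) :
    (Mmat m n z l).det = ∏ j, (z ^ m - l j ^ m) := by
  rw [Mmat, Matrix.det_blockDiagonal]
  exact Finset.prod_congr rfl fun j _ => det_cycblock m z (l j)

lemma Nmat_mul (m n : ℕ) [NeZero m] (z : R) (l : Fin n → R) :
    Nmat m n z l * Mmat m n z l = (∏ j, (z ^ m - l j ^ m)) • 1 := by
  rw [Nmat, Mmat, ← Matrix.blockDiagonal_mul]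
  have key : ∀ j : Fin n,
      ((∏ t ∈ Finset.univ.erase j, (z ^ m - l t ^ m)) • Smat m z (l j)) *
        (z • (1 : Matrix (ZMod m) (ZMod m) R) - l j • cyc m R 1)
      = (∏ t, (z ^ m - l t ^ m)) • (1 : Matrix (ZMod m) (ZMod m) R) := by
    intro j
    rw [smul_mul_assoc, Smat_mul, smul_smul, Finset.prod_erase_mul _ _ (Finset.mem_univ j)]
  simp only [key]
  ext ⟨h, j⟩ ⟨i, t⟩
  simp only [Matrix.blockDiagonal_apply, Matrix.smul_apply, Matrix.one_apply, smul_eq_mul,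
    Prod.mk.injEq]
  by_cases hjt : j = t <;> by_cases hhi : h = i <;> simp [hjt, hhi]

lemma adj_unique {α : Type*} [CommRing α] [IsDomain α] {N : Type*} [Fintype N] [DecidableEq N]
    (M B : Matrix N N α) (hd : M.det ≠ 0) (h : B * M = M.det • 1) : B = M.adjugate := by
  have h2 : (B - M.adjugate) * M = 0 := by
    rw [sub_mul, h, Matrix.adjugate_mul, sub_self]
  have h3 : (B - M.adjugate) * M * M.adjugate = 0 := by rw [h2, Matrix.zero_mul]
  rw [Matrix.mul_assoc, Matrix.mul_adjugate] at h3
  rw [Matrix.mul_smul, Matrix.mul_one] at h3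
  ext i j
  have h5 := congrFun (congrFun h3 i) j
  simp only [Matrix.smul_apply, Matrix.sub_apply, Matrix.zero_apply, smul_eq_mul] at h5
  rcases mul_eq_zero.mp h5 with h6 | h6
  · exact absurd h6 hd
  · have := sub_eq_zero.mp h6
    simpa [Matrix.sub_apply] using this

lemma adjugate_Mmat_poly (m n : ℕ) [NeZero m] (lam : Fin n → ℂ) :
    (Mmat m n (X : ℂ[X]) (fun j => Polynomial.C (lam j))).adjugate
      = Nmat m n (X : ℂ[X]) (fun j => Polynomial.C (lam j)) := by
  refine (adj_unique _ _ ?_ ?_).symm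
  · rw [det_Mmat]
    refine Finset.prod_ne_zero_iff.mpr fun j _ => ?_
    have := Polynomial.X_pow_sub_C_ne_zero (Nat.pos_of_ne_zero (NeZero.ne m)) (lam j ^ m)
    simpa [map_pow] using this
  · rw [Nmat_mul, det_Mmat]

lemma map_Mmat (m n : ℕ) {S : Type*} [CommRing S] (f : R →+* S) (z : R) (l : Fin n → R) :
    (Mmat m n z l).map f = Mmat m n (f z) (fun j => f (l j)) := by
  ext ⟨h, j⟩ ⟨i, t⟩
  simp only [Mmat, Matrix.map_apply, Matrix.blockDiagonal_apply, Matrix.sub_apply,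
    Matrix.smul_apply, Matrix.one_apply, cyc, Matrix.of_apply, smul_eq_mul, mul_ite, mul_one,
    mul_zero, apply_ite f, map_sub, map_zero, _root_.map_mul]

lemma map_Nmat (m n : ℕ) {S : Type*} [CommRing S] (f : R →+* S) (z : R) (l : Fin n → R) :
    (Nmat m n z l).map f = Nmat m n (f z) (fun j => f (l j)) := by
  ext ⟨h, j⟩ ⟨i, t⟩
  simp only [Nmat, Smat, Matrix.map_apply, Matrix.blockDiagonal_apply, Matrix.smul_apply,
    Matrix.sum_apply, cyc, Matrix.of_apply, smul_eq_mul, mul_ite, mul_one, mul_zero,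
    apply_ite f, map_zero, _root_.map_mul, map_sum, map_prod, map_sub, map_pow]

lemma adjugate_Mmat (m n : ℕ) [NeZero m] (lam : Fin n → ℂ) (z : ℂ) :
    (Mmat m n z lam).adjugate = Nmat m n z lam := by
  have h := adjugate_Mmat_poly m n lam
  have hmap := (Polynomial.evalRingHom z).map_adjugate
    (Mmat m n (X : ℂ[X]) (fun j => Polynomial.C (lam j)))
  rw [h] at hmap
  rw [RingHom.mapMatrix_apply, RingHom.mapMatrix_apply, map_Mmat, map_Nmat] at hmap
  simp only [Polynomial.coe_evalRingHom, Polynomial.eval_X, Polynomial.eval_C] at hmap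
  exact hmap.symm



lemma Mmat_eq (m n : ℕ) (lam : Fin n → ℂ) (z : ℂ) :
    z • (1 : Matrix (ZMod m × Fin n) (ZMod m × Fin n) ℂ) - Ltilde m n lam
      = Mmat m n z lam := by
  ext ⟨h, j⟩ ⟨i, t⟩
  simp only [Mmat, Matrix.blockDiagonal_apply, Matrix.sub_apply, Matrix.smul_apply,
    Matrix.one_apply, Ltilde, cyc, Matrix.of_apply, smul_eq_mul, Prod.mk.injEq]
  by_cases hjt : j = t
  · subst hjt
    simp [mul_ite]
  · have h1 : t ≠ j := fun hc => hjt hc.symm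
    simp [hjt, h1]

lemma Smat_diag (m : ℕ) [NeZero m] (z : ℂ) (i h : ZMod m) : Smat m z z i h = z ^ (m - 1) := by
  have hrw : ∀ t ∈ Finset.range m,
      ((z ^ (m - 1 - t) * z ^ t) • cyc m ℂ (t : ZMod m)) i h
        = z ^ (m - 1) * (if t = (h - i).val then 1 else 0) := by
    intro t ht
    rw [Finset.mem_range] at ht
    have hc : z ^ (m - 1 - t) * z ^ t = z ^ (m - 1) := by
      rw [← pow_add]
      congr 1
      omega
    have hiff : (h = i + (t : ZMod m)) ↔ t = (h - i).val := by
      constructor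
      · intro he
        have h2 : (t : ZMod m) = h - i := by rw [he]; ring
        rw [← h2, ZMod.val_cast_of_lt ht]
      · intro he
        rw [he, ZMod.natCast_zmod_val]
        ring
    simp only [Matrix.smul_apply, cyc, Matrix.of_apply, smul_eq_mul, hc, hiff]
  rw [Smat, Matrix.sum_apply]
  rw [Finset.sum_congr rfl hrw, ← Finset.mul_sum,
    Finset.sum_ite_eq' (Finset.range m) ((h - i).val) (fun _ => (1:ℂ)),
    if_pos (Finset.mem_range.mpr (ZMod.val_lt _)), mul_one]

lemma zmod_sum_eq (m : ℕ) [NeZero m] (F : ZMod m → ℂ) :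
    ∑ i : ZMod m, F i = ∑ t ∈ Finset.range m, F (t : ZMod m) := by
  refine (Finset.sum_nbij' (fun (i : ZMod m) => i.val) (fun t => (t : ZMod m)) ?_ ?_ ?_ ?_ ?_).symm.symm
  · intro i _
    exact Finset.mem_range.mpr (ZMod.val_lt i)
  · intro t _
    exact Finset.mem_univ _
  · intro i _
    exact ZMod.natCast_zmod_val i
  · intro t ht
    exact ZMod.val_cast_of_lt (Finset.mem_range.mp ht)
  · intro i _
    rw [ZMod.natCast_zmod_val]

lemma aux_double (G : ℕ → ℂ) (M : ℕ) :
    ∑ t ∈ Finset.range M, ∑ r ∈ Finset.range (t + 1), G r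
      = ∑ s ∈ Finset.range M, ((M : ℂ) - s) * G s := by
  induction M with
  | zero => simp
  | succ M ih =>
    rw [Finset.sum_range_succ, ih,
      Finset.sum_range_succ (fun s : ℕ => (((M + 1 : ℕ) : ℂ) - (s : ℂ)) * G s) M,
      Finset.sum_range_succ (f := G), ← add_assoc, ← Finset.sum_add_distrib]
    rw [Finset.sum_congr rfl (fun s _ => by push_cast; ring :
      ∀ s ∈ Finset.range M, ((M : ℂ) - s) * G s + G s = (((M + 1 : ℕ) : ℂ) - (s : ℂ)) * G s)]
    push_cast
    ring

lemma sum_cConst (m : ℕ) [NeZero m] (g : ZMod m → ℂ) :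
    ∑ i : ZMod m, cConst m g i = 0 := by
  have hm : (m : ℂ) ≠ 0 := Nat.cast_ne_zero.mpr (NeZero.ne m)
  rw [zmod_sum_eq]
  have hval : ∀ t ∈ Finset.range m, cConst m g (t : ZMod m)
      = (∑ r ∈ Finset.range (t + 1), g (r : ZMod m)) -
        ∑ s ∈ Finset.range m, (((m : ℂ) - (s : ℂ)) / (m : ℂ)) * g (s : ZMod m) := by
    intro t ht
    rw [cConst, ZMod.val_cast_of_lt (Finset.mem_range.mp ht)]
  rw [Finset.sum_congr rfl hval, Finset.sum_sub_distrib, aux_double (fun r => g (r : ZMod m)),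
    Finset.sum_const, Finset.card_range]
  rw [Finset.smul_sum]
  rw [sub_eq_zero]
  refine Finset.sum_congr rfl fun s _ => ?_
  rw [nsmul_eq_mul]
  field_simp

lemma deriv_Afun (m n : ℕ) [NeZero m] (lam : Fin n → ℂ) (k : Fin n) :
    deriv (Afun m n lam) (lam k)
      = (∏ t ∈ Finset.univ.erase k, (lam k ^ m - lam t ^ m)) * ((m : ℂ) * lam k ^ (m - 1)) := by
  have hAfun : Afun m n lam = fun z =>
      (z ^ m - lam k ^ m) * ∏ t ∈ Finset.univ.erase k, (z ^ m - lam t ^ m) := by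
    funext z
    rw [Afun, Mmat_eq, det_Mmat,
      ← Finset.mul_prod_erase Finset.univ (fun j => z ^ m - lam j ^ m) (Finset.mem_univ k)]
  have hg : DifferentiableAt ℂ (fun z => ∏ t ∈ Finset.univ.erase k, (z ^ m - lam t ^ m))
      (lam k) := by
    refine DifferentiableAt.fun_finsetProd fun t _ => ?_
    exact (differentiableAt_id.pow m).sub (differentiableAt_const _)
  have hf : HasDerivAt (fun z : ℂ => z ^ m - lam k ^ m) ((m : ℂ) * lam k ^ (m - 1)) (lam k) := by
    simpa using (hasDerivAt_pow m (lam k)).sub_const (lam k ^ m)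
  have hprod := hf.mul hg.hasDerivAt
  rw [hAfun]
  erw [hprod.deriv]
  simp [mul_comm]


lemma trace_QN (m n : ℕ) [NeZero m] (g : ZMod m → ℂ) (lam phi : Fin n → ℂ) (k : Fin n) :
    Matrix.trace (Qtilde m n g lam phi * Nmat m n (lam k) lam)
      = ((m : ℂ) * phi k) *
        ((∏ t ∈ Finset.univ.erase k, (lam k ^ m - lam t ^ m)) * lam k ^ (m - 1)) := by
  classical
  set zk := lam k with hzk
  set d : Fin n → ℂ := fun j => ∏ t ∈ Finset.univ.erase j, (zk ^ m - lam t ^ m) with hd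
  have hN : ∀ (q p : ZMod m × Fin n), Nmat m n zk lam q p
      = if q.2 = p.2 then d q.2 * Smat m zk (lam q.2) q.1 p.1 else 0 := by
    rintro ⟨i, l⟩ ⟨h, j⟩
    simp [Nmat, Matrix.blockDiagonal_apply, hd]
  have step1 : Matrix.trace (Qtilde m n g lam phi * Nmat m n zk lam)
      = ∑ p : ZMod m × Fin n, ∑ q : ZMod m × Fin n,
          Qtilde m n g lam phi p q * Nmat m n zk lam q p := by
    rw [Matrix.trace]
    simp [Matrix.diag, Matrix.mul_apply]
  have step2 : ∀ p : ZMod m × Fin n, (∑ q : ZMod m × Fin n,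
      Qtilde m n g lam phi p q * Nmat m n zk lam q p)
      = ∑ i : ZMod m, Qtilde m n g lam phi p (i, p.2) *
          (d p.2 * Smat m zk (lam p.2) i p.1) := by
    intro p
    rw [Fintype.sum_prod_type]
    refine Finset.sum_congr rfl fun i _ => ?_
    have : ∀ l : Fin n, Qtilde m n g lam phi p (i, l) * Nmat m n zk lam (i, l) p
        = if l = p.2 then Qtilde m n g lam phi p (i, l) *
            (d l * Smat m zk (lam l) i p.1) else 0 := by
      intro l
      rw [hN]
      simp only [mul_ite, mul_zero]
    rw [Finset.sum_congr rfl fun l _ => this l,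
      Finset.sum_ite_eq' Finset.univ p.2
        (fun l => Qtilde m n g lam phi p (i, l) * (d l * Smat m zk (lam l) i p.1)),
      if_pos (Finset.mem_univ _)]
  rw [step1, Finset.sum_congr rfl fun p _ => step2 p, Fintype.sum_prod_type, Finset.sum_comm]
  rw [Finset.sum_eq_single k]
  · -- j = k term
    have hS : ∀ i h : ZMod m, Smat m zk (lam k) i h = zk ^ (m - 1) := by
      intro i h
      rw [← hzk]
      exact Smat_diag m zk i h
    have hQ : ∀ h i : ZMod m, Qtilde m n g lam phi (h, k) (i, k)
        = if h = i + 1 then phi k + cConst m g i / zk else 0 := by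
      intro h i
      simp [Qtilde, hzk]
    have hterm : ∀ h i : ZMod m, Qtilde m n g lam phi (h, k) (i, k) *
        (d k * Smat m zk (lam k) i h)
        = if h = i + 1 then (phi k + cConst m g i / zk) * (d k * zk ^ (m - 1)) else 0 := by
      intro h i
      rw [hQ, hS, ite_mul, zero_mul]
    calc ∑ h : ZMod m, ∑ i : ZMod m, Qtilde m n g lam phi (h, k) (i, k) *
          (d k * Smat m zk (lam k) i h)
        = ∑ i : ZMod m, ∑ h : ZMod m,
            (if h = i + 1 then (phi k + cConst m g i / zk) * (d k * zk ^ (m - 1)) else 0) := by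
          rw [Finset.sum_comm]
          exact Finset.sum_congr rfl fun i _ => Finset.sum_congr rfl fun h _ => hterm h i
      _ = ∑ i : ZMod m, (phi k + cConst m g i / zk) * (d k * zk ^ (m - 1)) := by
          refine Finset.sum_congr rfl fun i _ => ?_
          rw [Finset.sum_ite_eq' Finset.univ (i + 1)
            (fun _ => (phi k + cConst m g i / zk) * (d k * zk ^ (m - 1))),
            if_pos (Finset.mem_univ _)]
      _ = ((m : ℂ) * phi k) * (d k * zk ^ (m - 1)) := by
          rw [Finset.sum_congr rfl (fun i _ => add_mul (phi k) (cConst m g i / zk)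
            (d k * zk ^ (m - 1))), Finset.sum_add_distrib]
          have h1 : ∑ i : ZMod m, phi k * (d k * zk ^ (m - 1))
              = (m : ℂ) * phi k * (d k * zk ^ (m - 1)) := by
            rw [Finset.sum_const, Finset.card_univ, ZMod.card, nsmul_eq_mul]
            ring
          have h2 : ∑ i : ZMod m, cConst m g i / zk * (d k * zk ^ (m - 1)) = 0 := by
            rw [← Finset.sum_mul]
            have : ∑ i : ZMod m, cConst m g i / zk = (∑ i : ZMod m, cConst m g i) / zk := by
              rw [Finset.sum_div]
            rw [this, sum_cConst, zero_div, zero_mul]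
          rw [h1, h2, add_zero]
  · -- other j vanish
    intro j _ hjk
    have hdj : d j = 0 := by
      rw [hd]
      refine Finset.prod_eq_zero (Finset.mem_erase.mpr ⟨fun hc => hjk hc.symm, Finset.mem_univ k⟩) ?_
      rw [hzk, sub_self]
    refine Finset.sum_eq_zero fun h _ => Finset.sum_eq_zero fun i _ => ?_
    rw [hdj, zero_mul, mul_zero]
  · intro hk
    exact absurd (Finset.mem_univ k) hk


end SpinAux

theorem spinless_phi_eq_D_div_A' (m n : ℕ) [NeZero m] (hn : 0 < n)
    (lam phi : Fin n → ℂ) (g : ZMod m → ℂ)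
    (hlam : ∀ j, lam j ≠ 0)
    (hsep : ∀ j k : Fin n, j ≠ k → lam j ^ m ≠ lam k ^ m) (k : Fin n) :
    deriv (Afun m n lam) (lam k) ≠ 0 ∧
    Dfun m n g lam phi (lam k) = phi k * deriv (Afun m n lam) (lam k) ∧
    phi k = Dfun m n g lam phi (lam k) / deriv (Afun m n lam) (lam k) := by
  classical
  set dk : ℂ := ∏ t ∈ Finset.univ.erase k, (lam k ^ m - lam t ^ m) with hdk
  have hdk0 : dk ≠ 0 := by
    refine Finset.prod_ne_zero_iff.mpr fun t ht => ?_
    have htk : t ≠ k := (Finset.mem_erase.mp ht).1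
    exact sub_ne_zero.mpr (hsep k t htk.symm)
  have hmC : (m : ℂ) ≠ 0 := Nat.cast_ne_zero.mpr (NeZero.ne m)
  have hlk : lam k ^ (m - 1) ≠ 0 := pow_ne_zero _ (hlam k)
  have hderiv : deriv (Afun m n lam) (lam k) = dk * ((m : ℂ) * lam k ^ (m - 1)) :=
    SpinAux.deriv_Afun m n lam k
  have hD : Dfun m n g lam phi (lam k) = ((m : ℂ) * phi k) * (dk * lam k ^ (m - 1)) := by
    rw [Dfun, SpinAux.Mmat_eq, SpinAux.adjugate_Mmat]
    exact SpinAux.trace_QN m n g lam phi k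
  refine ⟨?_, ?_, ?_⟩
  · rw [hderiv]
    exact mul_ne_zero hdk0 (mul_ne_zero hmC hlk)
  · rw [hD, hderiv]; ring
  · rw [hD, hderiv]
    field_simp
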